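/- Let n ≥ 2, p, q ∈ (0,1), let π be a prior mass function on Θ_n with π(θ) > 0 for all θ ∈ Θ_n, fix θ ∈ Θ_n, and let S ⊆ Θ_n \ {θ} be non-empty. Set d = min_{η ∈ S} |D_1(θ,η) ∪ D_2(θ,η)|. Then the P_θ-expectation of the posterior mass of S satisfies P_θ Π(S | X^n) ≤ ρ(p,q)^d · Σ_{η ∈ S} √(π(η)/π(θ)). -/

import Mathlib

open Finset Real Filter

/-- The set of potential edges of an `n`-vertex graph: pairs `(i,j)` with `i < j`. -/
abbrev Edge (n : ℕ) := {e : Fin n × Fin n // e.1 < e.2}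

/-- An observed graph: an edge indicator for each potential edge. -/
abbrev ObsGraph (n : ℕ) := Edge n → Bool

/-- Edge probability under assignment `θ`: `p` within communities, `q` between. -/
noncomputable def edgeProb {n : ℕ} (p q : ℝ) (θ : Fin n → Bool) (e : Edge n) : ℝ :=
  if θ e.val.1 = θ e.val.2 then p else q

/-- Probability mass function of the observed graph under `θ`. -/
noncomputable def graphPMF {n : ℕ} (p q : ℝ) (θ : Fin n → Bool) (x : ObsGraph n) : ℝ :=
  ∏ e : Edge n, if x e then edgeProb p q θ e else 1 - edgeProb p q θ e

/-- Hellinger affinity of Bernoulli parameters. -/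
noncomputable def rho (p q : ℝ) : ℝ := Real.sqrt (p * q) + Real.sqrt ((1 - p) * (1 - q))

/-- Edges whose probability changes from `p` to `q` when replacing `θ` by `η`. -/
def D1 {n : ℕ} (θ η : Fin n → Bool) : Finset (Fin n × Fin n) :=
  Finset.univ.filter fun e => e.1 < e.2 ∧ θ e.1 = θ e.2 ∧ η e.1 ≠ η e.2

/-- Edges whose probability changes from `q` to `p` when replacing `θ` by `η`. -/
def D2 {n : ℕ} (θ η : Fin n → Bool) : Finset (Fin n × Fin n) :=
  Finset.univ.filter fun e => e.1 < e.2 ∧ θ e.1 ≠ θ e.2 ∧ η e.1 = η e.2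

/-- Hamming distance. -/
def hdist {n : ℕ} (θ η : Fin n → Bool) : ℕ := (Finset.univ.filter fun i => θ i ≠ η i).card

/-- The metric `k(θ,η) = h(θ,η) ∧ (n - h(θ,η))`. -/
def kdist {n : ℕ} (θ η : Fin n → Bool) : ℕ := min (hdist θ η) (n - hdist θ η)

/-- Size of the smallest community. -/
def countOnes {n : ℕ} (θ : Fin n → Bool) : ℕ := (Finset.univ.filter fun i => θ i = true).card

/-- The parameter space `Θ_n`. -/
def Theta (n : ℕ) : Finset (Fin n → Bool) :=
  Finset.univ.filter fun θ => 2 * countOnes θ ≤ n ∧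
    ∀ i : Fin n, 2 * countOnes θ = n → (i : ℕ) = 0 → θ i = false

/-- Posterior mass of `A ⊆ Θ_n` given data `x`, under prior mass function `π`. -/
noncomputable def postMass {n : ℕ} (p q : ℝ) (pri : (Fin n → Bool) → ℝ)
    (A : Finset (Fin n → Bool)) (x : ObsGraph n) : ℝ :=
  (∑ η ∈ A, pri η * graphPMF p q η x) / (∑ η ∈ Theta n, pri η * graphPMF p q η x)

/-- `P_θ`-expectation of the posterior mass of `A`. -/
noncomputable def expPostMass {n : ℕ} (p q : ℝ) (pri : (Fin n → Bool) → ℝ)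
    (θ : Fin n → Bool) (A : Finset (Fin n → Bool)) : ℝ :=
  ∑ x : ObsGraph n, graphPMF p q θ x * postMass p q pri A x

/-- The uniform prior on `Θ_n`. -/
noncomputable def unifPrior (n : ℕ) : (Fin n → Bool) → ℝ := fun _ => ((2:ℝ) ^ (n - 1))⁻¹

/-- Hamming ball `B_n(θ,k)` inside `Θ_n`. -/
def hball {n : ℕ} (θ : Fin n → Bool) (k : ℕ) : Finset (Fin n → Bool) :=
  (Theta n).filter fun η => kdist η θ ≤ k


lemma sqrt_add_le' (a b : ℝ) : Real.sqrt (a + b) ≤ Real.sqrt a + Real.sqrt b := by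
  rcases le_or_gt a 0 with h | h
  · calc Real.sqrt (a + b) ≤ Real.sqrt b := Real.sqrt_le_sqrt (by linarith)
      _ ≤ _ := le_add_of_nonneg_left (Real.sqrt_nonneg a)
  rcases le_or_gt b 0 with h' | h'
  · calc Real.sqrt (a + b) ≤ Real.sqrt a := Real.sqrt_le_sqrt (by linarith)
      _ ≤ _ := le_add_of_nonneg_right (Real.sqrt_nonneg b)
  · have ha := Real.sq_sqrt h.le
    have hb := Real.sq_sqrt h'.le
    have h1 : a + b ≤ (Real.sqrt a + Real.sqrt b) ^ 2 := by
      nlinarith [Real.sqrt_nonneg a, Real.sqrt_nonneg b]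
    calc Real.sqrt (a + b) ≤ Real.sqrt ((Real.sqrt a + Real.sqrt b) ^ 2) :=
          Real.sqrt_le_sqrt h1
      _ = _ := Real.sqrt_sq (by positivity)

lemma sqrt_finset_sum_le {α : Type*} (s : Finset α) (f : α → ℝ) :
    Real.sqrt (∑ a ∈ s, f a) ≤ ∑ a ∈ s, Real.sqrt (f a) := by
  induction s using Finset.cons_induction with
  | empty => simp
  | cons a s ha ih =>
    rw [Finset.sum_cons, Finset.sum_cons]
    exact (sqrt_add_le' _ _).trans (by gcongr)

lemma sqrt_finset_prod {α : Type*} (s : Finset α) (f : α → ℝ) (hf : ∀ a ∈ s, 0 ≤ f a) :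
    Real.sqrt (∏ a ∈ s, f a) = ∏ a ∈ s, Real.sqrt (f a) := by
  induction s using Finset.cons_induction with
  | empty => simp
  | cons a s ha ih =>
    rw [Finset.prod_cons, Finset.prod_cons, Real.sqrt_mul (hf a (Finset.mem_cons_self a s)),
      ih fun b hb => hf b (Finset.mem_cons_of_mem hb)]

lemma rho_pos {p q : ℝ} (hp : p ∈ Set.Ioo (0:ℝ) 1) (hq : q ∈ Set.Ioo (0:ℝ) 1) :
    0 < Real.sqrt (p*q) + Real.sqrt ((1-p)*(1-q)) := by
  have : 0 < Real.sqrt (p*q) := Real.sqrt_pos.2 (mul_pos hp.1 hq.1)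
  have := Real.sqrt_nonneg ((1-p)*(1-q))
  linarith

lemma rho_le_one {p q : ℝ} (hp : p ∈ Set.Ioo (0:ℝ) 1) (hq : q ∈ Set.Ioo (0:ℝ) 1) :
    Real.sqrt (p*q) + Real.sqrt ((1-p)*(1-q)) ≤ 1 := by
  have h1 : Real.sqrt (p*q) ≤ (p+q)/2 := by
    rw [show (p+q)/2 = Real.sqrt (((p+q)/2)^2) from (Real.sqrt_sq (by nlinarith [hp.1, hq.1] : (0:ℝ) ≤ (p+q)/2)).symm]
    exact Real.sqrt_le_sqrt (by nlinarith [sq_nonneg (p-q)])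
  have h2 : Real.sqrt ((1-p)*(1-q)) ≤ (2-p-q)/2 := by
    rw [show (2-p-q)/2 = Real.sqrt (((2-p-q)/2)^2) from (Real.sqrt_sq (by nlinarith [hp.2, hq.2] : (0:ℝ) ≤ (2-p-q)/2)).symm]
    exact Real.sqrt_le_sqrt (by nlinarith [sq_nonneg (p-q)])
  linarith

section Aux
variable {n : ℕ}

lemma graphPMF_pos {p q : ℝ} (hp : p ∈ Set.Ioo (0:ℝ) 1) (hq : q ∈ Set.Ioo (0:ℝ) 1)
    (θ : Fin n → Bool) (x : ObsGraph n) : 0 < graphPMF p q θ x := by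
  apply Finset.prod_pos
  intro e _
  by_cases hx : x e <;> by_cases hc : θ e.val.1 = θ e.val.2 <;>
    simp [hx, hc, edgeProb, hp.1, hq.1] <;> linarith [hp.2, hq.2]

lemma affinity {p q : ℝ} (hp : p ∈ Set.Ioo (0:ℝ) 1) (hq : q ∈ Set.Ioo (0:ℝ) 1)
    (θ η : Fin n → Bool) :
    ∑ x : ObsGraph n, Real.sqrt (graphPMF p q θ x * graphPMF p q η x)
      = rho p q ^ (D1 θ η ∪ D2 θ η).card := by
  have step1 : ∀ x : ObsGraph n, Real.sqrt (graphPMF p q θ x * graphPMF p q η x)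
      = ∏ e : Edge n, Real.sqrt ((if x e then edgeProb p q θ e else 1 - edgeProb p q θ e)
          * (if x e then edgeProb p q η e else 1 - edgeProb p q η e)) := by
    intro x
    rw [graphPMF, graphPMF, ← Finset.prod_mul_distrib]
    apply sqrt_finset_prod
    intro e _
    by_cases hx : x e <;> by_cases h1 : θ e.val.1 = θ e.val.2 <;>
      by_cases h2 : η e.val.1 = η e.val.2 <;>
      simp [hx, h1, h2, edgeProb] <;>
      nlinarith [hp.1, hq.1, hp.2, hq.2]
  simp only [step1]
  rw [← Fintype.prod_sum (fun (e : Edge n) (b : Bool) =>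
    Real.sqrt ((if b then edgeProb p q θ e else 1 - edgeProb p q θ e)
      * (if b then edgeProb p q η e else 1 - edgeProb p q η e)))]
  have step2 : ∀ e : Edge n, (∑ b : Bool,
      Real.sqrt ((if b then edgeProb p q θ e else 1 - edgeProb p q θ e)
        * (if b then edgeProb p q η e else 1 - edgeProb p q η e)))
      = if (θ e.val.1 = θ e.val.2) ↔ (η e.val.1 = η e.val.2) then 1 else rho p q := by
    intro e
    rw [Fintype.sum_bool]
    have e1 : Real.sqrt (p * p) = p := Real.sqrt_mul_self hp.1.le
    have e2 : Real.sqrt (q * q) = q := Real.sqrt_mul_self hq.1.le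
    have e3 : Real.sqrt ((1-p) * (1-p)) = 1 - p :=
      Real.sqrt_mul_self (by linarith [hp.2])
    have e4 : Real.sqrt ((1-q) * (1-q)) = 1 - q :=
      Real.sqrt_mul_self (by linarith [hq.2])
    by_cases h1 : θ e.val.1 = θ e.val.2 <;> by_cases h2 : η e.val.1 = η e.val.2 <;>
      simp only [edgeProb, h1, h2, if_true, if_false, if_pos, if_neg, rho, iff_true,
        iff_false, not_true, not_false_iff] <;>
      simp only [h1, h2, Bool.false_eq_true, if_true, if_false, e1, e2, e3, e4, if_pos,
        if_neg, not_false_iff, mul_comm q p, mul_comm (1-q) (1-p)]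
    all_goals try linarith
  simp only [step2]
  rw [Finset.prod_ite, Finset.prod_const, Finset.prod_const]
  rw [one_pow, one_mul]
  congr 1
  have : D1 θ η ∪ D2 θ η = Finset.univ.filter
      (fun e : Fin n × Fin n => e.1 < e.2 ∧ ¬((θ e.1 = θ e.2) ↔ (η e.1 = η e.2))) := by
    rw [D1, D2, ← Finset.filter_or]
    apply Finset.filter_congr
    intro e _
    constructor
    · rintro (⟨h, h1, h2⟩ | ⟨h, h1, h2⟩) <;> exact ⟨h, by tauto⟩
    · rintro ⟨h, h2⟩
      by_cases h1 : θ e.1 = θ e.2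
      · exact Or.inl ⟨h, h1, by tauto⟩
      · exact Or.inr ⟨h, h1, by tauto⟩
  rw [this]
  apply Finset.card_bij (fun (e : Edge n) _ => e.val)
  · intro e he
    simp only [Finset.mem_filter, Finset.mem_univ, true_and] at he ⊢
    exact ⟨e.prop, he⟩
  · intro e₁ _ e₂ _ h
    exact Subtype.ext h
  · intro e he
    simp only [Finset.mem_filter, Finset.mem_univ, true_and] at he
    exact ⟨⟨e, he.1⟩, by simp [he.2], rfl⟩

end Aux

/-- posterior mass bound
`P_θ Π(S | X^n) ≤ ρ(p,q)^d Σ_{η ∈ S} √(π(η)/π(θ))`. -/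
theorem stmt5 (n : ℕ) (hn : 2 ≤ n) (p q : ℝ) (hp : p ∈ Set.Ioo (0:ℝ) 1)
    (hq : q ∈ Set.Ioo (0:ℝ) 1) (pri : (Fin n → Bool) → ℝ)
    (hpri : ∀ θ ∈ Theta n, 0 < pri θ)
    (θ : Fin n → Bool) (hθ : θ ∈ Theta n)
    (S : Finset (Fin n → Bool)) (hS : S ⊆ Theta n \ {θ}) (hSne : S.Nonempty)
    (d : ℕ) (hd : d = S.inf' hSne fun η => (D1 θ η ∪ D2 θ η).card) :
    expPostMass p q pri θ S
      ≤ rho p q ^ d * ∑ η ∈ S, Real.sqrt (pri η / pri θ) := by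
  have hSsub : S ⊆ Theta n := fun η hη => (Finset.mem_sdiff.1 (hS hη)).1
  have hpriθ : 0 < pri θ := hpri θ hθ
  have hρpos : 0 < rho p q := by
    have : 0 < Real.sqrt (p*q) := Real.sqrt_pos.2 (mul_pos hp.1 hq.1)
    have := Real.sqrt_nonneg ((1-p)*(1-q))
    rw [rho]; linarith
  have hρ1 : rho p q ≤ 1 := by
    have h1 : Real.sqrt (p*q) ≤ (p+q)/2 := by
      rw [show (p+q)/2 = Real.sqrt (((p+q)/2)^2) from
        (Real.sqrt_sq (by nlinarith [hp.1, hq.1] : (0:ℝ) ≤ (p+q)/2)).symm]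
      exact Real.sqrt_le_sqrt (by nlinarith [sq_nonneg (p-q)])
    have h2 : Real.sqrt ((1-p)*(1-q)) ≤ (2-p-q)/2 := by
      rw [show (2-p-q)/2 = Real.sqrt (((2-p-q)/2)^2) from
        (Real.sqrt_sq (by nlinarith [hp.2, hq.2] : (0:ℝ) ≤ (2-p-q)/2)).symm]
      exact Real.sqrt_le_sqrt (by nlinarith [sq_nonneg (p-q)])
    rw [rho]; linarith
  -- pointwise bound
  have pointwise : ∀ x : ObsGraph n, graphPMF p q θ x * postMass p q pri S x
      ≤ ∑ η ∈ S, Real.sqrt (pri η / pri θ) *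
          Real.sqrt (graphPMF p q θ x * graphPMF p q η x) := by
    intro x
    set fθ := graphPMF p q θ x with hfθ
    have hfθpos : 0 < fθ := graphPMF_pos hp hq θ x
    set A := ∑ η ∈ S, pri η * graphPMF p q η x with hA
    set Dm := ∑ η ∈ Theta n, pri η * graphPMF p q η x with hDm
    have hterm : ∀ η ∈ Theta n, 0 ≤ pri η * graphPMF p q η x :=
      fun η hη => le_of_lt (mul_pos (hpri η hη) (graphPMF_pos hp hq η x))
    have hA0 : 0 ≤ A := Finset.sum_nonneg fun η hη => hterm η (hSsub hη)
    have hcpos : 0 < pri θ * fθ := mul_pos hpriθ hfθpos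
    have hcD : pri θ * fθ ≤ Dm := Finset.single_le_sum hterm hθ
    have hDpos : 0 < Dm := lt_of_lt_of_le hcpos hcD
    have hAD : A ≤ Dm := Finset.sum_le_sum_of_subset_of_nonneg hSsub
      fun η hη _ => hterm η hη
    set r := A / (pri θ * fθ) with hr
    have hr0 : 0 ≤ r := div_nonneg hA0 hcpos.le
    have hpost1 : postMass p q pri S x ≤ 1 := by
      rw [postMass]; exact div_le_one_of_le₀ hAD hDpos.le
    have hpostr : postMass p q pri S x ≤ r := by
      rw [postMass, hr]; gcongr
    have hsq : postMass p q pri S x ≤ Real.sqrt r := by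
      have hs := Real.sq_sqrt hr0
      have hs0 := Real.sqrt_nonneg r
      rcases le_total r 1 with h | h
      · nlinarith
      · nlinarith
    calc fθ * postMass p q pri S x ≤ fθ * Real.sqrt r := by
          have hpost0 : 0 ≤ postMass p q pri S x := by
            rw [postMass]; exact div_nonneg hA0 hDpos.le
          exact mul_le_mul_of_nonneg_left hsq hfθpos.le
      _ = Real.sqrt (fθ ^ 2 * r) := by
          rw [Real.sqrt_mul (by positivity), Real.sqrt_sq hfθpos.le]
      _ = Real.sqrt (∑ η ∈ S, (pri η / pri θ) * (fθ * graphPMF p q η x)) := by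
          congr 1
          rw [hr, hA, Finset.sum_div, Finset.mul_sum]
          apply Finset.sum_congr rfl
          intro η hη
          field_simp
      _ ≤ ∑ η ∈ S, Real.sqrt ((pri η / pri θ) * (fθ * graphPMF p q η x)) :=
          sqrt_finset_sum_le _ _
      _ = ∑ η ∈ S, Real.sqrt (pri η / pri θ) *
            Real.sqrt (fθ * graphPMF p q η x) := by
          apply Finset.sum_congr rfl
          intro η hη
          exact Real.sqrt_mul (div_nonneg (hpri η (hSsub hη)).le hpriθ.le) _
  calc expPostMass p q pri θ S
      ≤ ∑ x : ObsGraph n, ∑ η ∈ S, Real.sqrt (pri η / pri θ) *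
          Real.sqrt (graphPMF p q θ x * graphPMF p q η x) := by
        rw [expPostMass]; exact Finset.sum_le_sum fun x _ => pointwise x
    _ = ∑ η ∈ S, Real.sqrt (pri η / pri θ) *
          ∑ x : ObsGraph n, Real.sqrt (graphPMF p q θ x * graphPMF p q η x) := by
        rw [Finset.sum_comm]
        exact Finset.sum_congr rfl fun η _ => (Finset.mul_sum _ _ _).symm
    _ = ∑ η ∈ S, Real.sqrt (pri η / pri θ) * rho p q ^ (D1 θ η ∪ D2 θ η).card := by
        exact Finset.sum_congr rfl fun η _ => by rw [affinity hp hq θ η]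
    _ ≤ ∑ η ∈ S, Real.sqrt (pri η / pri θ) * rho p q ^ d := by
        apply Finset.sum_le_sum
        intro η hη
        apply mul_le_mul_of_nonneg_left _ (Real.sqrt_nonneg _)
        apply pow_le_pow_of_le_one hρpos.le hρ1
        rw [hd]
        exact Finset.inf'_le _ hη
    _ = rho p q ^ d * ∑ η ∈ S, Real.sqrt (pri η / pri θ) := by
        rw [← Finset.sum_mul, mul_comm]
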